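/- For every integer k ≥ 1 and every finite set P of points in the plane ℝ², there exists a k-coloring χ : P → Fin k such that every closed half-plane h with |P ∩ h| ≥ 2k − 1 is polychromatic, i.e., for every color i < k there exists a point p ∈ P ∩ h with χ(p) = i. (Upper bound part of the main theorem: f_H(k) ≤ 2k − 1.) -/

import Mathlib

open scoped Classical
open Real Finset

namespace PolyHP


def memMod (x y : ℝ) (φ : ℝ) : Prop := ∃ n : ℤ, φ + 2*π*n ∈ Set.Icc x y

lemma three_intervals (u v : Fin 3 → ℝ) (φ : ℝ) (h : ∀ i, φ ∈ Set.Icc (u i) (v i)) :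
    ∃ i : Fin 3, ∀ t ∈ Set.Icc (u i) (v i), ∃ j, j ≠ i ∧ t ∈ Set.Icc (u j) (v j) := by
  obtain ⟨a, -, ha⟩ := Finset.exists_min_image Finset.univ u ⟨0, Finset.mem_univ 0⟩
  obtain ⟨b, -, hb⟩ := Finset.exists_max_image Finset.univ v ⟨0, Finset.mem_univ 0⟩
  simp only [Finset.mem_univ, forall_true_left, true_implies] at ha hb
  by_cases hab : a = b
  · obtain ⟨i, hia⟩ : ∃ i : Fin 3, i ≠ a := by
      fin_cases a <;> decide
    refine ⟨i, fun t ht => ⟨a, Ne.symm hia, ⟨le_trans (ha i) ht.1, le_trans ht.2 (hab ▸ hb i)⟩⟩⟩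
  · obtain ⟨i, hia, hib⟩ : ∃ i : Fin 3, i ≠ a ∧ i ≠ b := by
      fin_cases a <;> fin_cases b <;> first | (exact absurd rfl hab) | decide
    refine ⟨i, fun t ht => ?_⟩
    rcases le_total t φ with htφ | htφ
    · exact ⟨a, Ne.symm hia, ⟨le_trans (ha i) ht.1, le_trans htφ (h a).2⟩⟩
    · exact ⟨b, Ne.symm hib, ⟨le_trans (h b).1 htφ, le_trans ht.2 (hb i)⟩⟩

lemma cover_mult_two_aux {ι : Type} (x y : ι → ℝ) (N : ℕ) :
    ∀ J : Finset ι, J.card ≤ N → (∀ φ : ℝ, ∃ j ∈ J, memMod (x j) (y j) φ) →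
    ∃ J', J' ⊆ J ∧ (∀ φ : ℝ, ∃ j ∈ J', memMod (x j) (y j) φ) ∧
      ∀ φ : ℝ, (J'.filter (fun j => memMod (x j) (y j) φ)).card ≤ 2 := by
  induction N with
  | zero =>
    intro J hJ cov
    refine ⟨J, Finset.Subset.refl J, cov, fun φ => ?_⟩
    have := Finset.card_le_card (Finset.filter_subset (fun j => memMod (x j) (y j) φ) J)
    omega
  | succ N ih =>
    intro J hJ cov
    by_cases H : ∀ φ : ℝ, (J.filter (fun j => memMod (x j) (y j) φ)).card ≤ 2
    · exact ⟨J, Finset.Subset.refl J, cov, H⟩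
    push_neg at H
    obtain ⟨φ, hφ⟩ := H
    rw [Finset.two_lt_card_iff] at hφ
    obtain ⟨a, b, c, ha, hb, hc, hab, hac, hbc⟩ := hφ
    rw [Finset.mem_filter] at ha hb hc
    obtain ⟨na, hna⟩ := ha.2
    obtain ⟨nb, hnb⟩ := hb.2
    obtain ⟨nc, hnc⟩ := hc.2
    set e : Fin 3 → ι := ![a, b, c] with he
    set nn : Fin 3 → ℤ := ![na, nb, nc] with hnn
    set u : Fin 3 → ℝ := fun i => x (e i) - 2*π*(nn i) with hu
    set v : Fin 3 → ℝ := fun i => y (e i) - 2*π*(nn i) with hv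
    have he0 : e 0 = a := by simp [he]
    have he1 : e 1 = b := by simp [he]
    have he2 : e 2 = c := by simp [he]
    have hn0 : nn 0 = na := by simp [hnn]
    have hn1 : nn 1 = nb := by simp [hnn]
    have hn2 : nn 2 = nc := by simp [hnn]
    have hm0 : φ ∈ Set.Icc (u 0) (v 0) := by
      simp only [hu, hv, he0, hn0, Set.mem_Icc]
      constructor <;> linarith [hna.1, hna.2]
    have hm1 : φ ∈ Set.Icc (u 1) (v 1) := by
      simp only [hu, hv, he1, hn1, Set.mem_Icc]
      constructor <;> linarith [hnb.1, hnb.2]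
    have hm2 : φ ∈ Set.Icc (u 2) (v 2) := by
      simp only [hu, hv, he2, hn2, Set.mem_Icc]
      constructor <;> linarith [hnc.1, hnc.2]
    have hmem : ∀ i, φ ∈ Set.Icc (u i) (v i) := by
      intro i
      fin_cases i
      · exact hm0
      · exact hm1
      · exact hm2
    obtain ⟨i, hrem⟩ := three_intervals u v φ hmem
    have heJ : ∀ j : Fin 3, e j ∈ J := by
      intro j
      fin_cases j
      · exact he0 ▸ ha.1
      · exact he1 ▸ hb.1
      · exact he2 ▸ hc.1
    have heiJ : e i ∈ J := heJ i
    have hecard : (J.erase (e i)).card ≤ N := by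
      rw [Finset.card_erase_of_mem heiJ]; omega
    have einj : ∀ j' : Fin 3, j' ≠ i → e j' ≠ e i := by
      have k01 : e 0 ≠ e 1 := by rw [he0, he1]; exact hab
      have k02 : e 0 ≠ e 2 := by rw [he0, he2]; exact hac
      have k12 : e 1 ≠ e 2 := by rw [he1, he2]; exact hbc
      intro j' hj'
      fin_cases j' <;> fin_cases i <;>
        first
          | exact absurd rfl hj'
          | exact k01 | exact k02 | exact k12
          | exact k01.symm | exact k02.symm | exact k12.symm
    have cov'' : ∀ ψ : ℝ, ∃ j ∈ J.erase (e i), memMod (x j) (y j) ψ := by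
      intro ψ
      obtain ⟨j, hj, nj, hnj⟩ := cov ψ
      by_cases hje : j = e i
      · subst hje
        have ht : ψ + 2*π*nj - 2*π*(nn i) ∈ Set.Icc (u i) (v i) := by
          simp only [hu, hv, Set.mem_Icc]
          constructor <;> linarith [hnj.1, hnj.2]
        obtain ⟨j', hj'i, ht'⟩ := hrem _ ht
        refine ⟨e j', Finset.mem_erase.mpr ⟨einj j' hj'i, heJ j'⟩,
          ⟨nj - nn i + nn j', ?_⟩⟩
        simp only [hu, hv, Set.mem_Icc] at ht'
        constructor <;> push_cast <;> linarith [ht'.1, ht'.2]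
      · exact ⟨j, Finset.mem_erase.mpr ⟨hje, hj⟩, nj, hnj⟩
    obtain ⟨J', hJ'sub, hcov', hmult⟩ := ih (J.erase (e i)) hecard cov''
    exact ⟨J', hJ'sub.trans (Finset.erase_subset _ _), hcov', hmult⟩

lemma cover_mult_two {ι : Type} (x y : ι → ℝ) (J : Finset ι)
    (cov : ∀ φ : ℝ, ∃ j ∈ J, memMod (x j) (y j) φ) :
    ∃ J', J' ⊆ J ∧ (∀ φ : ℝ, ∃ j ∈ J', memMod (x j) (y j) φ) ∧
      ∀ φ : ℝ, (J'.filter (fun j => memMod (x j) (y j) φ)).card ≤ 2 :=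
  cover_mult_two_aux x y J.card J le_rfl cov



/-- value of point `p` in direction of angle `φ` -/
noncomputable def vl (φ : ℝ) (p : ℝ × ℝ) : ℝ := Real.cos φ * p.1 + Real.sin φ * p.2

lemma vl_periodic (φ : ℝ) (n : ℤ) (p : ℝ × ℝ) : vl (φ + 2*π*n) p = vl φ p := by
  unfold vl
  rw [show φ + 2*π*n = φ + n * (2*π) by ring, Real.cos_add_int_mul_two_pi,
    Real.sin_add_int_mul_two_pi]

lemma vl_antipode (φ : ℝ) (p : ℝ × ℝ) : vl (φ - π) p = - vl φ p := by
  unfold vl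
  rw [Real.cos_sub_pi, Real.sin_sub_pi]; ring

lemma vl_cont (p : ℝ × ℝ) : Continuous (fun φ => vl φ p) := by
  unfold vl
  exact (Real.continuous_cos.mul continuous_const).add
    (Real.continuous_sin.mul continuous_const)

lemma sinusoid_identity (A B x y z : ℝ) :
    (A*Real.cos y + B*Real.sin y) * Real.sin (z - x)
      = (A*Real.cos x + B*Real.sin x) * Real.sin (z - y)
        + (A*Real.cos z + B*Real.sin z) * Real.sin (y - x) := by
  simp only [Real.sin_sub]
  ring

lemma sinusoid_nonneg_between {A B x y z : ℝ} (hx : 0 ≤ A*Real.cos x + B*Real.sin x)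
    (hz : 0 ≤ A*Real.cos z + B*Real.sin z) (hxy : x ≤ y) (hyz : y ≤ z)
    (hlt : z - x < π) : 0 ≤ A*Real.cos y + B*Real.sin y := by
  rcases eq_or_lt_of_le (le_trans hxy hyz) with heq | hltxz
  · have : y = x := le_antisymm (heq ▸ hyz) hxy
    exact this ▸ hx
  · have hsin : 0 < Real.sin (z - x) :=
      Real.sin_pos_of_pos_of_lt_pi (by linarith) hlt
    have h1 : 0 ≤ Real.sin (z - y) :=
      Real.sin_nonneg_of_nonneg_of_le_pi (by linarith) (by linarith)
    have h2 : 0 ≤ Real.sin (y - x) :=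
      Real.sin_nonneg_of_nonneg_of_le_pi (by linarith) (by linarith)
    have key := sinusoid_identity A B x y z
    by_contra hneg
    push_neg at hneg
    have : (A*Real.cos y + B*Real.sin y) * Real.sin (z - x) < 0 :=
      mul_neg_of_neg_of_pos hneg hsin
    nlinarith [mul_nonneg hx h1, mul_nonneg hz h2]

/-- number of points of `P` strictly below `p` in direction `φ` -/
noncomputable def lowc (P : Finset (ℝ × ℝ)) (φ : ℝ) (p : ℝ × ℝ) : ℕ :=
  (P.filter (fun q => vl φ q < vl φ p)).card

lemma lowc_periodic (P : Finset (ℝ × ℝ)) (φ : ℝ) (n : ℤ) (p : ℝ × ℝ) :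
    lowc P (φ + 2*π*n) p = lowc P φ p := by
  unfold lowc
  congr 1
  apply Finset.filter_congr
  intro q _
  rw [vl_periodic, vl_periodic]

lemma vl_sub_eq (x : ℝ) (q t : ℝ × ℝ) :
    vl x q - vl x t = (q.1 - t.1) * Real.cos x + (q.2 - t.2) * Real.sin x := by
  unfold vl; ring

lemma lowc_mono_of_min {P : Finset (ℝ × ℝ)} {t : ℝ × ℝ} {α φ ψ : ℝ}
    (hmin : ∀ q ∈ P, vl α t ≤ vl α q)
    (hφ1 : α - π < φ) (hφ2 : φ < α + π)
    (hψ1 : min φ α ≤ ψ) (hψ2 : ψ ≤ max φ α) :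
    lowc P ψ t ≤ lowc P φ t := by
  apply Finset.card_le_card
  intro q hq
  rw [Finset.mem_filter] at hq ⊢
  refine ⟨hq.1, ?_⟩
  by_contra hcon
  push_neg at hcon
  have hα : 0 ≤ (q.1 - t.1) * Real.cos α + (q.2 - t.2) * Real.sin α := by
    have := hmin q hq.1; rw [← vl_sub_eq]; linarith
  have hφ : 0 ≤ (q.1 - t.1) * Real.cos φ + (q.2 - t.2) * Real.sin φ := by
    rw [← vl_sub_eq]; linarith
  have hψ : (q.1 - t.1) * Real.cos ψ + (q.2 - t.2) * Real.sin ψ < 0 := by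
    rw [← vl_sub_eq]; linarith [hq.2]
  rcases le_total φ α with hle | hle
  · rw [min_eq_left hle] at hψ1
    rw [max_eq_right hle] at hψ2
    have := sinusoid_nonneg_between (A := q.1 - t.1) (B := q.2 - t.2)
      (x := φ) (y := ψ) (z := α) hφ hα hψ1 hψ2 (by linarith)
    linarith
  · rw [min_eq_right hle] at hψ1
    rw [max_eq_left hle] at hψ2
    have := sinusoid_nonneg_between (A := q.1 - t.1) (B := q.2 - t.2)
      (x := α) (y := ψ) (z := φ) hα hφ hψ1 hψ2 (by linarith)
    linarith

lemma lowc_lsc (P : Finset (ℝ × ℝ)) (t : ℝ × ℝ) (x : ℝ) :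
    ∃ δ > 0, ∀ y : ℝ, |y - x| < δ → lowc P x t ≤ lowc P y t := by
  have key : ∀ q : ℝ × ℝ, ∃ δ, 0 < δ ∧
      (vl x q < vl x t → ∀ y, |y - x| < δ → vl y q < vl y t) := by
    intro q
    by_cases hq : vl x q < vl x t
    · have hopen : IsOpen {y : ℝ | vl y q < vl y t} :=
        isOpen_lt (vl_cont q) (vl_cont t)
      obtain ⟨ε, hε, hball⟩ := Metric.isOpen_iff.mp hopen x hq
      refine ⟨ε, hε, fun _ y hy => hball ?_⟩
      rw [Metric.mem_ball, Real.dist_eq]; exact hy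
    · exact ⟨1, one_pos, fun h => absurd h hq⟩
  choose δf hδpos hδ using key
  by_cases hF : (P.filter (fun q => vl x q < vl x t)).Nonempty
  · set F := P.filter (fun q => vl x q < vl x t) with hFdef
    refine ⟨(F.image δf).min' (hF.image δf), ?_, ?_⟩
    · obtain ⟨d, hd, hdeq⟩ := Finset.mem_image.mp
        ((F.image δf).min'_mem (hF.image δf))
      exact hdeq ▸ hδpos d
    · intro y hy
      apply Finset.card_le_card
      intro q hq
      rw [Finset.mem_filter] at hq ⊢
      refine ⟨hq.1, hδ q hq.2 y (lt_of_lt_of_le hy ?_)⟩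
      apply Finset.min'_le
      exact Finset.mem_image_of_mem δf (Finset.mem_filter.mpr hq)
  · refine ⟨1, one_pos, fun y _ => ?_⟩
    unfold lowc
    rw [Finset.not_nonempty_iff_eq_empty.mp hF]
    simp





/-- there is a downward-closed subset of any size -/
lemma exists_lower_subset (P : Finset (ℝ × ℝ)) (φ : ℝ) :
    ∀ j ≤ P.card, ∃ S ⊆ P, S.card = j ∧
      ∀ p ∈ S, ∀ q ∈ P, q ∉ S → vl φ p ≤ vl φ q := by
  intro j
  induction j with
  | zero => exact fun _ => ⟨∅, Finset.empty_subset P, Finset.card_empty, by simp⟩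
  | succ j ih =>
    intro hj
    obtain ⟨S, hS, hcard, hprop⟩ := ih (by omega)
    have hne : (P \ S).Nonempty := by
      rw [← Finset.card_pos, Finset.card_sdiff_of_subset hS]
      omega
    obtain ⟨q₀, hq₀, hq₀min⟩ := Finset.exists_min_image (P \ S) (vl φ) hne
    rw [Finset.mem_sdiff] at hq₀
    refine ⟨insert q₀ S, Finset.insert_subset hq₀.1 hS, ?_, ?_⟩
    · rw [Finset.card_insert_of_notMem hq₀.2, hcard]
    · intro p hp q hq hqS
      rw [Finset.mem_insert] at hp
      have hq' : q ∈ P \ S := Finset.mem_sdiff.mpr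
        ⟨hq, fun hh => hqS (Finset.mem_insert_of_mem hh)⟩
      rcases hp with rfl | hp
      · exact hq₀min q hq'
      · exact hprop p hp q hq (Finset.mem_sdiff.mp hq').2

lemma lowc_card_ge (P : Finset (ℝ × ℝ)) (m : ℕ) (hmP : m ≤ P.card) (φ : ℝ) :
    m ≤ (P.filter (fun p => lowc P φ p < m)).card := by
  obtain ⟨S, hS, hcard, hprop⟩ := exists_lower_subset P φ m hmP
  have hsub : S ⊆ P.filter (fun p => lowc P φ p < m) := by
    intro p hp
    rw [Finset.mem_filter]
    refine ⟨hS hp, ?_⟩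
    have hsub2 : P.filter (fun q => vl φ q < vl φ p) ⊆ S.erase p := by
      intro q hq
      rw [Finset.mem_filter] at hq
      rw [Finset.mem_erase]
      constructor
      · rintro rfl; exact lt_irrefl _ hq.2
      · by_contra hqS
        exact absurd (hprop p hp q hq.1 hqS) (not_le.mpr hq.2)
    have := Finset.card_le_card hsub2
    rw [Finset.card_erase_of_mem hp, hcard] at this
    unfold lowc
    have hm1 : 1 ≤ m := by
      rcases Nat.eq_zero_or_pos m with rfl | h
      · exact absurd hp (by
          have : S = ∅ := Finset.card_eq_zero.mp hcard
          simp [this])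
      · exact h
    omega
  calc m = S.card := hcard.symm
    _ ≤ _ := Finset.card_le_card hsub

/-- polar decomposition of a nonzero planar vector -/
lemma exists_polar (a : ℝ × ℝ) (ha : a ≠ 0) :
    ∃ r : ℝ, 0 < r ∧ ∃ φ : ℝ, a.1 = r * Real.cos φ ∧ a.2 = r * Real.sin φ := by
  set z : ℂ := ⟨a.1, a.2⟩ with hz
  have hz0 : z ≠ 0 := by
    intro h
    apply ha
    have h1 : z.re = 0 := by rw [h]; simp
    have h2 : z.im = 0 := by rw [h]; simp
    rw [hz] at h1 h2
    exact Prod.ext h1 h2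
  have key := Complex.norm_mul_cos_add_sin_mul_I z
  refine ⟨‖z‖, norm_pos_iff.mpr hz0, z.arg, ?_, ?_⟩
  · have := congrArg Complex.re key
    exact (Complex.norm_mul_cos_arg z).symm
  · have := congrArg Complex.im key
    exact (Complex.norm_mul_sin_arg z).symm

/-- lift an angle into the window `[c - π, c + π)` -/
lemma exists_lift (φ c : ℝ) : ∃ n : ℤ, c - π ≤ φ + 2*π*n ∧ φ + 2*π*n < c + π := by
  have hpi := Real.pi_pos
  have h2 : (0:ℝ) < 2*π := by linarith
  refine ⟨⌈(c - π - φ)/(2*π)⌉, ?_, ?_⟩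
  · have := Int.le_ceil ((c - π - φ)/(2*π))
    rw [div_le_iff₀ h2] at this
    linarith
  · set v := (c - π - φ)/(2*π) with hv
    have h3 : (⌈v⌉ : ℝ) < v + 1 := Int.ceil_lt_add_one v
    have h5 : (⌈v⌉ : ℝ) * (2*π) < (v + 1) * (2*π) :=
      mul_lt_mul_of_pos_right h3 h2
    have h6 : v * (2*π) = c - π - φ := by
      rw [hv]; field_simp
    nlinarith [h5, h6]

lemma det_zero_of_orth (a w u : ℝ × ℝ) (ha : a ≠ 0)
    (hw : a.1*w.1 + a.2*w.2 = 0) (hu : a.1*u.1 + a.2*u.2 = 0) :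
    w.1*u.2 - w.2*u.1 = 0 := by
  have h1 : (w.1*u.2 - w.2*u.1) * a.1 = 0 := by linear_combination u.2 * hw - w.2 * hu
  have h2 : (w.1*u.2 - w.2*u.1) * a.2 = 0 := by linear_combination (-u.1) * hw + w.1 * hu
  by_contra hdet
  apply ha
  exact Prod.ext (by
    rcases mul_eq_zero.mp h1 with h | h
    · exact absurd h hdet
    · exact h) (by
    rcases mul_eq_zero.mp h2 with h | h
    · exact absurd h hdet
    · exact h)






lemma polar_arg (w1 w2 : ℝ) (hw : ¬(w1 = 0 ∧ w2 = 0)) :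
    0 < ‖(⟨w1, w2⟩ : ℂ)‖ ∧
    w1 = ‖(⟨w1, w2⟩ : ℂ)‖ * Real.cos (Complex.arg ⟨w1, w2⟩) ∧
    w2 = ‖(⟨w1, w2⟩ : ℂ)‖ * Real.sin (Complex.arg ⟨w1, w2⟩) := by
  set z : ℂ := ⟨w1, w2⟩ with hz
  have hz0 : z ≠ 0 := by
    intro h
    apply hw
    have h1 : z.re = 0 := by rw [h]; simp
    have h2 : z.im = 0 := by rw [h]; simp
    exact ⟨h1, h2⟩
  have key := Complex.norm_mul_cos_add_sin_mul_I z
  refine ⟨norm_pos_iff.mpr hz0, ?_, ?_⟩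
  · have := congrArg Complex.re key
    exact (Complex.norm_mul_cos_arg z).symm
  · have := congrArg Complex.im key
    exact (Complex.norm_mul_sin_arg z).symm

/-- critical angles of a point set -/
noncomputable def crit (P : Finset (ℝ × ℝ)) : Finset ℝ :=
  P.biUnion (fun p => P.biUnion (fun q =>
    (Finset.Icc (-4 : ℤ) 4).image
      (fun n : ℤ => Complex.arg ⟨p.1 - q.1, p.2 - q.2⟩ + π/2 + π*(n:ℝ))))

lemma crit_complete (P : Finset (ℝ × ℝ)) {p q : ℝ × ℝ} (hp : p ∈ P) (hq : q ∈ P)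
    (hpq : p ≠ q) {ξ : ℝ} (hξ0 : 0 ≤ ξ) (hξ2 : ξ ≤ 2*π)
    (heq : vl ξ p = vl ξ q) : ξ ∈ crit P := by
  have hpi := Real.pi_pos
  have hw0 : ¬(p.1 - q.1 = 0 ∧ p.2 - q.2 = 0) := by
    rintro ⟨h1, h2⟩
    exact hpq (Prod.ext (by linarith) (by linarith))
  obtain ⟨hr, h1, h2⟩ := polar_arg (p.1 - q.1) (p.2 - q.2) hw0
  set R := ‖(⟨p.1 - q.1, p.2 - q.2⟩ : ℂ)‖ with hR
  set β := Complex.arg (⟨p.1 - q.1, p.2 - q.2⟩ : ℂ) with hβ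
  have hcos : Real.cos (ξ - β) = 0 := by
    have hval : Real.cos ξ * (p.1 - q.1) + Real.sin ξ * (p.2 - q.2) = 0 := by
      unfold vl at heq; linarith [heq]
    rw [h1, h2] at hval
    have hRcos : R * Real.cos (ξ - β) = 0 := by
      rw [Real.cos_sub]; linarith [hval]
    rcases mul_eq_zero.mp hRcos with h | h
    · exact absurd h (ne_of_gt hr)
    · exact h
  obtain ⟨k, hk⟩ := Real.cos_eq_zero_iff.mp hcos
  have hβ1 : -π < β := Complex.neg_pi_lt_arg _
  have hβ2 : β ≤ π := Complex.arg_le_pi _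
  have hξβ : ξ = β + π/2 + π * k := by linear_combination hk
  have hk4 : k ∈ Finset.Icc (-4 : ℤ) 4 := by
    rw [Finset.mem_Icc]
    have hkr : π * (k : ℝ) = ξ - β - π/2 := by linarith [hξβ]
    constructor
    · have h4 : π * (-4 : ℝ) < π * (k : ℝ) := by nlinarith
      have := (mul_lt_mul_iff_of_pos_left hpi).mp h4
      exact_mod_cast le_of_lt (by exact_mod_cast this : (-4:ℤ) < k)
    · have h4 : π * (k : ℝ) < π * (4 : ℝ) := by nlinarith
      have := (mul_lt_mul_iff_of_pos_left hpi).mp h4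
      exact_mod_cast le_of_lt (by exact_mod_cast this : k < (4:ℤ))
  unfold crit
  rw [Finset.mem_biUnion]
  refine ⟨p, hp, ?_⟩
  rw [Finset.mem_biUnion]
  refine ⟨q, hq, ?_⟩
  rw [Finset.mem_image]
  exact ⟨k, hk4, by rw [hξβ, ← hβ]⟩

lemma crit_in_window (P : Finset (ℝ × ℝ)) {p q : ℝ × ℝ} (hp : p ∈ P) (hq : q ∈ P)
    (hpq : p ≠ q) {s : ℝ} (hs0 : 0 ≤ s) (hs2 : s + π ≤ 2*π) :
    ∃ c ∈ crit P, s ≤ c ∧ c < s + π := by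
  have hpi := Real.pi_pos
  set β := Complex.arg (⟨p.1 - q.1, p.2 - q.2⟩ : ℂ) with hβ
  have hβ1 : -π < β := Complex.neg_pi_lt_arg _
  have hβ2 : β ≤ π := Complex.arg_le_pi _
  set k : ℤ := ⌈(s - (β + π/2))/π⌉ with hkdef
  have hkl : s - (β + π/2) ≤ π * (k : ℝ) := by
    have h0 := Int.le_ceil ((s - (β + π/2))/π)
    rw [div_le_iff₀ hpi] at h0
    rw [hkdef]; linarith [h0]
  have hku : π * (k : ℝ) < s - (β + π/2) + π := by
    have h0 := Int.ceil_lt_add_one ((s - (β + π/2))/π)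
    have h2 : ((⌈(s - (β + π/2))/π⌉ : ℤ) : ℝ) * π < ((s - (β + π/2))/π + 1) * π :=
      mul_lt_mul_of_pos_right h0 hpi
    have h3 : ((s - (β + π/2))/π + 1) * π = s - (β + π/2) + π := by field_simp
    rw [h3] at h2
    rw [hkdef]; linarith [h2]
  refine ⟨β + π/2 + π * (k:ℝ), ?_, by linarith, by linarith⟩
  have hk4 : k ∈ Finset.Icc (-4 : ℤ) 4 := by
    rw [Finset.mem_Icc]
    constructor
    · have h4 : π * (-4 : ℝ) < π * (k : ℝ) := by nlinarith
      have := (mul_lt_mul_iff_of_pos_left hpi).mp h4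
      exact_mod_cast le_of_lt (by exact_mod_cast this : (-4:ℤ) < k)
    · have h4 : π * (k : ℝ) < π * (4 : ℝ) := by nlinarith
      have := (mul_lt_mul_iff_of_pos_left hpi).mp h4
      exact_mod_cast le_of_lt (by exact_mod_cast this : k < (4:ℤ))
  unfold crit
  rw [Finset.mem_biUnion]
  refine ⟨p, hp, ?_⟩
  rw [Finset.mem_biUnion]
  refine ⟨q, hq, ?_⟩
  rw [Finset.mem_image]
  exact ⟨k, hk4, by rw [← hβ]⟩

lemma crit_of_vl_eq {P : Finset (ℝ × ℝ)} {t q : ℝ × ℝ} (ht : t ∈ P) (hq : q ∈ P)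
    (htq : t ≠ q) {ξ : ℝ} (hξ : ξ ∈ Set.Icc 0 (2*π)) (h : vl ξ t = vl ξ q) :
    ξ ∈ crit P := crit_complete P ht hq htq hξ.1 hξ.2 h

/-- constancy of lowc on critical-free intervals -/
lemma lowc_const (P : Finset (ℝ × ℝ)) {t : ℝ × ℝ} (ht : t ∈ P) {u w : ℝ}
    (hsub : Set.Icc u w ⊆ Set.Icc 0 (2*π))
    (hfree : ∀ c ∈ crit P, c ∉ Set.Icc u w)
    {ψ α : ℝ} (hψ : ψ ∈ Set.Icc u w) (hα : α ∈ Set.Icc u w) :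
    lowc P ψ t = lowc P α t := by
  unfold lowc
  congr 1
  apply Finset.filter_congr
  intro q hqP
  by_cases hqt : q = t
  · subst hqt; simp
  have hnozero : ∀ ξ ∈ Set.Icc (min ψ α) (max ψ α), vl ξ t - vl ξ q ≠ 0 := by
    intro ξ hξ hzero
    have hξuw : ξ ∈ Set.Icc u w := by
      constructor
      · exact le_trans (le_min hψ.1 hα.1) hξ.1
      · exact le_trans hξ.2 (max_le hψ.2 hα.2)
    exact hfree ξ (crit_of_vl_eq ht hqP (fun h => hqt h.symm)
      (hsub hξuw) (by linarith [hzero] : vl ξ t = vl ξ q)) hξuw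
  have hcont : ContinuousOn (fun ξ => vl ξ t - vl ξ q)
      (Set.Icc (min ψ α) (max ψ α)) := by
    apply Continuous.continuousOn
    unfold vl
    continuity
  have hsign : (0 < vl ψ t - vl ψ q) ↔ (0 < vl α t - vl α q) := by
    constructor
    · intro hψpos
      by_contra hαneg
      push_neg at hαneg
      have hαneg' : vl α t - vl α q < 0 :=
        lt_of_le_of_ne hαneg (hnozero α ⟨min_le_right _ _, le_max_right _ _⟩)
      rcases le_total ψ α with hle | hle
      · obtain ⟨ξ, hξmem, hξeq⟩ := intermediate_value_Icc' hle
          (by rw [min_eq_left hle, max_eq_right hle] at hcont; exact hcont)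
          (Set.mem_Icc.mpr ⟨le_of_lt hαneg', le_of_lt hψpos⟩)
        exact hnozero ξ (by rw [min_eq_left hle, max_eq_right hle]; exact hξmem) hξeq
      · obtain ⟨ξ, hξmem, hξeq⟩ := intermediate_value_Icc hle
          (by rw [min_eq_right hle, max_eq_left hle] at hcont; exact hcont)
          (Set.mem_Icc.mpr ⟨le_of_lt hαneg', le_of_lt hψpos⟩)
        exact hnozero ξ (by rw [min_eq_right hle, max_eq_left hle]; exact hξmem) hξeq
    · intro hαpos
      by_contra hψneg
      push_neg at hψneg
      have hψneg' : vl ψ t - vl ψ q < 0 :=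
        lt_of_le_of_ne hψneg (hnozero ψ ⟨min_le_left _ _, le_max_left _ _⟩)
      rcases le_total ψ α with hle | hle
      · obtain ⟨ξ, hξmem, hξeq⟩ := intermediate_value_Icc hle
          (by rw [min_eq_left hle, max_eq_right hle] at hcont; exact hcont)
          (Set.mem_Icc.mpr ⟨le_of_lt hψneg', le_of_lt hαpos⟩)
        exact hnozero ξ (by rw [min_eq_left hle, max_eq_right hle]; exact hξmem) hξeq
      · obtain ⟨ξ, hξmem, hξeq⟩ := intermediate_value_Icc' hle
          (by rw [min_eq_right hle, max_eq_left hle] at hcont; exact hcont)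
          (Set.mem_Icc.mpr ⟨le_of_lt hψneg', le_of_lt hαpos⟩)
        exact hnozero ξ (by rw [min_eq_right hle, max_eq_left hle]; exact hξmem) hξeq
  constructor
  · intro h; have : 0 < vl ψ t - vl ψ q := by linarith
    have := hsign.mp this; linarith
  · intro h; have : 0 < vl α t - vl α q := by linarith
    have := hsign.mpr this; linarith


/-- no three points of `S` are collinear -/
def NoThreeCollinear (S : Finset (ℝ × ℝ)) : Prop :=
  ∀ p ∈ S, ∀ q ∈ S, ∀ r ∈ S, p ≠ q → p ≠ r → q ≠ r →
    (q.1 - p.1) * (r.2 - p.2) - (q.2 - p.2) * (r.1 - p.1) ≠ 0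

lemma NoThreeCollinear.mono {S T : Finset (ℝ × ℝ)} (h : NoThreeCollinear T)
    (hsub : S ⊆ T) : NoThreeCollinear S :=
  fun p hp q hq r hr => h p (hsub hp) q (hsub hq) r (hsub hr)

noncomputable def tmin (P : Finset (ℝ × ℝ)) (α : ℝ) : ℝ × ℝ :=
  if h : P.Nonempty then Classical.choose (Finset.exists_min_image P (vl α) h) else (0, 0)

lemma tmin_mem {P : Finset (ℝ × ℝ)} (h : P.Nonempty) (α : ℝ) : tmin P α ∈ P := by
  unfold tmin
  rw [dif_pos h]
  exact (Classical.choose_spec (Finset.exists_min_image P (vl α) h)).1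

lemma tmin_min {P : Finset (ℝ × ℝ)} (h : P.Nonempty) (α : ℝ) :
    ∀ q ∈ P, vl α (tmin P α) ≤ vl α q := by
  unfold tmin
  rw [dif_pos h]
  exact (Classical.choose_spec (Finset.exists_min_image P (vl α) h)).2

lemma lowc_tmin_zero {P : Finset (ℝ × ℝ)} (h : P.Nonempty) (α : ℝ) :
    lowc P α (tmin P α) = 0 := by
  unfold lowc
  rw [Finset.card_eq_zero, Finset.filter_eq_empty_iff]
  exact fun {q} hq => not_lt.mpr (tmin_min h α q hq)

/-- the arc of directions around `α` where `tmin α` stays `m`-shallow -/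
def arcSet (P : Finset (ℝ × ℝ)) (m : ℕ) (α : ℝ) : Set ℝ :=
  {φ | α - π < φ ∧ φ < α + π ∧
    ∀ ψ, min φ α ≤ ψ → ψ ≤ max φ α → lowc P ψ (tmin P α) < m}

lemma self_mem_arcSet {P : Finset (ℝ × ℝ)} {m : ℕ} (hP : P.Nonempty) (hm : 1 ≤ m)
    (α : ℝ) : α ∈ arcSet P m α := by
  have hpi := Real.pi_pos
  refine ⟨by linarith, by linarith, ?_⟩
  intro ψ h1 h2
  rw [min_self] at h1
  rw [max_self] at h2
  have : ψ = α := le_antisymm h2 h1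
  rw [this, lowc_tmin_zero hP]
  omega

lemma arcSet_nonempty {P : Finset (ℝ × ℝ)} {m : ℕ} (hP : P.Nonempty) (hm : 1 ≤ m)
    (α : ℝ) : (arcSet P m α).Nonempty := ⟨α, self_mem_arcSet hP hm α⟩

lemma arcSet_bddBelow (P : Finset (ℝ × ℝ)) (m : ℕ) (α : ℝ) :
    BddBelow (arcSet P m α) := ⟨α - π, fun φ hφ => le_of_lt hφ.1⟩

lemma arcSet_bddAbove (P : Finset (ℝ × ℝ)) (m : ℕ) (α : ℝ) :
    BddAbove (arcSet P m α) := ⟨α + π, fun φ hφ => le_of_lt hφ.2.1⟩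

noncomputable def xe (P : Finset (ℝ × ℝ)) (m : ℕ) (α : ℝ) : ℝ := sInf (arcSet P m α)
noncomputable def ye (P : Finset (ℝ × ℝ)) (m : ℕ) (α : ℝ) : ℝ := sSup (arcSet P m α)

lemma xe_le_alpha {P : Finset (ℝ × ℝ)} {m : ℕ} (hP : P.Nonempty) (hm : 1 ≤ m)
    (α : ℝ) : xe P m α ≤ α := csInf_le (arcSet_bddBelow P m α) (self_mem_arcSet hP hm α)

lemma alpha_le_ye {P : Finset (ℝ × ℝ)} {m : ℕ} (hP : P.Nonempty) (hm : 1 ≤ m)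
    (α : ℝ) : α ≤ ye P m α := le_csSup (arcSet_bddAbove P m α) (self_mem_arcSet hP hm α)

lemma xe_gt {P : Finset (ℝ × ℝ)} {m : ℕ} (hP : P.Nonempty) (hm : 1 ≤ m) (α : ℝ) :
    α - π ≤ xe P m α :=
  le_csInf (arcSet_nonempty hP hm α) (fun φ hφ => le_of_lt hφ.1)

lemma ye_lt {P : Finset (ℝ × ℝ)} {m : ℕ} (hP : P.Nonempty) (hm : 1 ≤ m) (α : ℝ) :
    ye P m α ≤ α + π :=
  csSup_le (arcSet_nonempty hP hm α) (fun φ hφ => le_of_lt hφ.2.1)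

/-- F1 : on the closed arc `[xe, ye]` the owner stays shallow -/
lemma lowc_lt_on_arc {P : Finset (ℝ × ℝ)} {m : ℕ} (hP : P.Nonempty) (hm : 1 ≤ m)
    (α : ℝ) {φ : ℝ} (h1 : xe P m α ≤ φ) (h2 : φ ≤ ye P m α) :
    lowc P φ (tmin P α) < m := by
  rcases le_total φ α with hφα | hαφ
  · by_cases hex : ∃ φ₁ ∈ arcSet P m α, φ₁ ≤ φ
    · obtain ⟨φ₁, harc, hle⟩ := hex
      exact harc.2.2 φ (le_trans (min_le_left _ _) hle) (le_trans hφα (le_max_right _ _))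
    · push_neg at hex
      have hxeφ : φ ≤ xe P m α :=
        le_csInf (arcSet_nonempty hP hm α) (fun b hb => le_of_lt (hex b hb))
      have hφeq : φ = xe P m α := le_antisymm hxeφ h1
      obtain ⟨δ, hδpos, hδ⟩ := lowc_lsc P (tmin P α) φ
      have hy : ∃ y ∈ arcSet P m α, y < xe P m α + δ := by
        by_contra hc
        push_neg at hc
        have : xe P m α + δ ≤ xe P m α :=
          le_csInf (arcSet_nonempty hP hm α) (fun b hb => hc b hb)
        linarith
      obtain ⟨y, hyarc, hylt⟩ := hy
      have hyge : xe P m α ≤ y := csInf_le (arcSet_bddBelow P m α) hyarc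
      have hyy : lowc P y (tmin P α) < m :=
        hyarc.2.2 y (min_le_left _ _) (le_max_left _ _)
      have h3 : lowc P φ (tmin P α) ≤ lowc P y (tmin P α) := by
        apply hδ
        rw [abs_lt]
        constructor <;> [linarith [hφeq ▸ hyge]; linarith [hφeq ▸ hylt]]
      omega
  · by_cases hex : ∃ φ₁ ∈ arcSet P m α, φ ≤ φ₁
    · obtain ⟨φ₁, harc, hle⟩ := hex
      exact harc.2.2 φ (le_trans (min_le_right _ _) hαφ) (le_trans hle (le_max_left _ _))
    · push_neg at hex
      have hyeφ : ye P m α ≤ φ :=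
        csSup_le (arcSet_nonempty hP hm α) (fun b hb => le_of_lt (hex b hb))
      have hφeq : φ = ye P m α := le_antisymm h2 hyeφ
      obtain ⟨δ, hδpos, hδ⟩ := lowc_lsc P (tmin P α) φ
      have hy : ∃ y ∈ arcSet P m α, ye P m α - δ < y := by
        by_contra hc
        push_neg at hc
        have : ye P m α ≤ ye P m α - δ :=
          csSup_le (arcSet_nonempty hP hm α) (fun b hb => hc b hb)
        linarith
      obtain ⟨y, hyarc, hylt⟩ := hy
      have hyle : y ≤ ye P m α := le_csSup (arcSet_bddAbove P m α) hyarc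
      have hyy : lowc P y (tmin P α) < m :=
        hyarc.2.2 y (min_le_left _ _) (le_max_left _ _)
      have h3 : lowc P φ (tmin P α) ≤ lowc P y (tmin P α) := by
        apply hδ
        rw [abs_lt]
        constructor <;> [linarith [hφeq ▸ hylt]; linarith [hφeq ▸ hyle]]
      omega

/-- F2 : interior shallowness implies arc membership -/
lemma mem_arc_of_lowc {P : Finset (ℝ × ℝ)} {m : ℕ} (hP : P.Nonempty)
    (α : ℝ) {φ : ℝ} (h1 : α - π < φ) (h2 : φ < α + π)
    (h3 : lowc P φ (tmin P α) < m) : xe P m α ≤ φ ∧ φ ≤ ye P m α := by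
  have hmem : φ ∈ arcSet P m α := by
    refine ⟨h1, h2, fun ψ hψ1 hψ2 => ?_⟩
    exact lt_of_le_of_lt
      (lowc_mono_of_min (tmin_min hP α) h1 h2 hψ1 hψ2) h3
  exact ⟨csInf_le (arcSet_bddBelow P m α) hmem, le_csSup (arcSet_bddAbove P m α) hmem⟩

/-- F3 : under general position and `m+2` points, the antipodal direction leaks nothing -/
lemma no_leak {P : Finset (ℝ × ℝ)} {m : ℕ} (hgen : NoThreeCollinear P)
    (hn : m + 2 ≤ P.card) (α : ℝ) : ¬ lowc P (α - π) (tmin P α) < m := by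
  have hP : P.Nonempty := Finset.card_pos.mp (by omega)
  intro hcon
  set t := tmin P α with htdef
  have htP : t ∈ P := tmin_mem hP α
  have hmax : ∀ q ∈ P, vl (α-π) q ≤ vl (α-π) t := by
    intro q hq
    rw [vl_antipode, vl_antipode]
    have := tmin_min hP α q hq
    linarith
  set Feq := (P.erase t).filter (fun q => vl (α-π) q = vl (α-π) t) with hFeq
  have hcover : P.erase t ⊆
      Feq ∪ P.filter (fun q => vl (α-π) q < vl (α-π) t) := by
    intro q hq
    rw [Finset.mem_union, hFeq, Finset.mem_filter, Finset.mem_filter]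
    have hqP := Finset.mem_of_mem_erase hq
    rcases eq_or_lt_of_le (hmax q hqP) with heq | hlt
    · exact Or.inl ⟨hq, heq⟩
    · exact Or.inr ⟨hqP, hlt⟩
  have hcard1 : (P.erase t).card = P.card - 1 := Finset.card_erase_of_mem htP
  have hcard2 : (P.erase t).card ≤ Feq.card +
      (P.filter (fun q => vl (α-π) q < vl (α-π) t)).card :=
    le_trans (Finset.card_le_card hcover) (Finset.card_union_le _ _)
  have hlowc : (P.filter (fun q => vl (α-π) q < vl (α-π) t)).card < m := hcon
  have hFeq2 : 1 < Feq.card := by omega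
  obtain ⟨q₁, hq₁, q₂, hq₂, hne⟩ := Finset.one_lt_card.mp hFeq2
  rw [hFeq, Finset.mem_filter] at hq₁ hq₂
  have ha0 : ((Real.cos (α-π), Real.sin (α-π)) : ℝ × ℝ) ≠ 0 := by
    intro h
    have h1 := congrArg Prod.fst h
    have h2 := congrArg Prod.snd h
    simp at h1 h2
    nlinarith [Real.sin_sq_add_cos_sq α, Real.sin_sq_add_cos_sq (α-π)]
  have e₁ : Real.cos (α-π) * (q₁.1 - t.1) + Real.sin (α-π) * (q₁.2 - t.2) = 0 := by
    have := hq₁.2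
    unfold vl at this
    linarith
  have e₂ : Real.cos (α-π) * (q₂.1 - t.1) + Real.sin (α-π) * (q₂.2 - t.2) = 0 := by
    have := hq₂.2
    unfold vl at this
    linarith
  have hdet := det_zero_of_orth ((Real.cos (α-π), Real.sin (α-π)))
    ((q₁.1 - t.1, q₁.2 - t.2)) ((q₂.1 - t.1, q₂.2 - t.2)) ha0 e₁ e₂
  simp only at hdet
  exact hgen t htP q₁ (Finset.mem_of_mem_erase hq₁.1) q₂ (Finset.mem_of_mem_erase hq₂.1)
    (Ne.symm (Finset.ne_of_mem_erase hq₁.1)) (Ne.symm (Finset.ne_of_mem_erase hq₂.1))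
    hne hdet

noncomputable def CS (P : Finset (ℝ × ℝ)) : Finset ℝ :=
  (crit P).filter (fun c => 0 ≤ c ∧ c ≤ 2*π) ∪ {0, 2*π}

noncomputable def cands (P : Finset (ℝ × ℝ)) : Finset ℝ :=
  CS P ∪ ((CS P) ×ˢ (CS P)).image (fun pr => (pr.1 + pr.2)/2)

lemma CS_zero (P : Finset (ℝ × ℝ)) : (0:ℝ) ∈ CS P := by
  unfold CS; rw [Finset.mem_union]; right; simp

lemma CS_two_pi (P : Finset (ℝ × ℝ)) : (2*π:ℝ) ∈ CS P := by
  unfold CS; rw [Finset.mem_union]; right; simp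

lemma CS_sub (P : Finset (ℝ × ℝ)) {c : ℝ} (hc : c ∈ CS P) : 0 ≤ c ∧ c ≤ 2*π := by
  have hpi := Real.pi_pos
  unfold CS at hc
  rw [Finset.mem_union] at hc
  rcases hc with hc | hc
  · exact (Finset.mem_filter.mp hc).2
  · simp at hc
    rcases hc with rfl | rfl
    · constructor <;> linarith
    · constructor <;> linarith

lemma CS_of_crit (P : Finset (ℝ × ℝ)) {c : ℝ} (hc : c ∈ crit P) (h0 : 0 ≤ c)
    (h2 : c ≤ 2*π) : c ∈ CS P := by
  unfold CS
  rw [Finset.mem_union]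
  exact Or.inl (Finset.mem_filter.mpr ⟨hc, h0, h2⟩)

lemma coverage {P : Finset (ℝ × ℝ)} {m : ℕ} (hP : P.Nonempty) (hm : 1 ≤ m)
    (htwo : ∃ p ∈ P, ∃ q ∈ P, p ≠ q) :
    ∀ φ : ℝ, 0 ≤ φ → φ < 2*π → ∃ α ∈ cands P, xe P m α ≤ φ ∧ φ ≤ ye P m α := by
  have hpi := Real.pi_pos
  intro φ h0 h2
  by_cases hφCS : φ ∈ CS P
  · exact ⟨φ, Finset.mem_union.mpr (Or.inl hφCS),
      xe_le_alpha hP hm φ, alpha_le_ye hP hm φ⟩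
  · have hφ0 : 0 < φ := by
      rcases eq_or_lt_of_le h0 with rfl | h
      · exact absurd (CS_zero P) hφCS
      · exact h
    set A := (CS P).filter (fun c => c < φ) with hA
    set B := (CS P).filter (fun c => φ < c) with hB
    have hAne : A.Nonempty := ⟨0, Finset.mem_filter.mpr ⟨CS_zero P, hφ0⟩⟩
    have hBne : B.Nonempty := ⟨2*π, Finset.mem_filter.mpr ⟨CS_two_pi P, h2⟩⟩
    set c₁ := A.max' hAne with hc₁def
    set c₂ := B.min' hBne with hc₂def
    have hc₁ : c₁ ∈ CS P ∧ c₁ < φ := Finset.mem_filter.mp (A.max'_mem hAne)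
    have hc₂ : c₂ ∈ CS P ∧ φ < c₂ := Finset.mem_filter.mp (B.min'_mem hBne)
    have hc₁0 : 0 ≤ c₁ := (CS_sub P hc₁.1).1
    have hc₂2 : c₂ ≤ 2*π := (CS_sub P hc₂.1).2
    have hno : ∀ c ∈ crit P, ¬(c₁ < c ∧ c < c₂) := by
      rintro c hc ⟨hl, hr⟩
      have hcCS : c ∈ CS P := CS_of_crit P hc (le_trans hc₁0 (le_of_lt hl))
        (le_trans (le_of_lt hr) hc₂2)
      rcases lt_trichotomy c φ with hlt | heq | hgt
      · have : c ∈ A := Finset.mem_filter.mpr ⟨hcCS, hlt⟩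
        have := Finset.le_max' A c this
        rw [← hc₁def] at this
        linarith
      · exact hφCS (heq ▸ hcCS)
      · have : c ∈ B := Finset.mem_filter.mpr ⟨hcCS, hgt⟩
        have := Finset.min'_le B c this
        rw [← hc₂def] at this
        linarith
    have hgap : c₂ - c₁ ≤ π := by
      by_contra hbig
      push_neg at hbig
      obtain ⟨p, hp, q, hq, hpq⟩ := htwo
      obtain ⟨c, hcrit, hs1, hs2⟩ := crit_in_window P hp hq hpq
        (s := (c₁ + c₂ - π)/2) (by linarith) (by linarith)
      exact hno c hcrit ⟨by linarith, by linarith⟩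
    set α := (c₁ + c₂)/2 with hαdef
    have hαcands : α ∈ cands P := by
      unfold cands
      rw [Finset.mem_union]
      right
      rw [Finset.mem_image]
      exact ⟨(c₁, c₂), Finset.mem_product.mpr ⟨hc₁.1, hc₂.1⟩, rfl⟩
    have hw1 : α - π < φ := by
      have : α - π < c₁ := by rw [hαdef]; linarith
      linarith [hc₁.2]
    have hw2 : φ < α + π := by
      have : c₂ < α + π := by rw [hαdef]; linarith
      linarith [hc₂.2]
    have hαc : c₁ < α ∧ α < c₂ := by
      constructor <;> (rw [hαdef]; linarith [hc₁.2, hc₂.2])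
    have hconst : lowc P φ (tmin P α) = lowc P α (tmin P α) := by
      apply lowc_const P (tmin_mem hP α) (u := min φ α) (w := max φ α)
      · intro ξ hξ
        constructor
        · calc (0:ℝ) ≤ c₁ := hc₁0
            _ ≤ min φ α := le_min (le_of_lt hc₁.2) (le_of_lt hαc.1)
            _ ≤ ξ := hξ.1
        · calc ξ ≤ max φ α := hξ.2
            _ ≤ c₂ := max_le (le_of_lt hc₂.2) (le_of_lt hαc.2)
            _ ≤ 2*π := hc₂2
      · intro c hc hcmem
        apply hno c hc
        constructor
        · calc c₁ < min φ α := lt_min hc₁.2 hαc.1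
            _ ≤ c := hcmem.1
        · calc c ≤ max φ α := hcmem.2
            _ < c₂ := max_lt hc₂.2 hαc.2
      · exact ⟨min_le_left _ _, le_max_left _ _⟩
      · exact ⟨min_le_right _ _, le_max_right _ _⟩
    have hlow : lowc P φ (tmin P α) < m := by
      rw [hconst, lowc_tmin_zero hP]
      omega
    exact ⟨α, hαcands, mem_arc_of_lowc hP α hw1 hw2 hlow⟩

/-- the core combinatorial lemma: a shallow hitting set exists -/
lemma core {P : Finset (ℝ × ℝ)} {m : ℕ} (hm : 1 ≤ m) (hgen : NoThreeCollinear P)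
    (hn : m + 2 ≤ P.card) :
    ∃ T, T ⊆ P ∧ ∀ φ : ℝ,
      1 ≤ (T.filter (fun p => lowc P φ p < m)).card ∧
      (T.filter (fun p => lowc P φ p < m)).card ≤ 2 := by
  have hpi := Real.pi_pos
  have hP : P.Nonempty := Finset.card_pos.mp (by omega)
  have htwo : ∃ p ∈ P, ∃ q ∈ P, p ≠ q := by
    obtain ⟨p, hp, q, hq, hpq⟩ := Finset.one_lt_card.mp (by omega : 1 < P.card)
    exact ⟨p, hp, q, hq, hpq⟩
  have cov : ∀ φ : ℝ, ∃ j ∈ cands P, memMod (xe P m j) (ye P m j) φ := by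
    intro φ
    obtain ⟨n, hn1, hn2⟩ := exists_lift φ π
    obtain ⟨α, hα, h1, h2⟩ := coverage hP hm htwo (φ + 2*π*n)
      (by linarith) (by linarith)
    exact ⟨α, hα, n, h1, h2⟩
  obtain ⟨J', hJ'sub, hcov', hmult⟩ := cover_mult_two (xe P m) (ye P m) (cands P) cov
  refine ⟨J'.image (tmin P), ?_, ?_⟩
  · intro s hs
    obtain ⟨α, -, rfl⟩ := Finset.mem_image.mp hs
    exact tmin_mem hP α
  intro φ
  constructor
  · obtain ⟨α, hα, n, hn1, hn2⟩ := hcov' φ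
    have hlt : lowc P (φ + 2*π*n) (tmin P α) < m :=
      lowc_lt_on_arc hP hm α hn1 hn2
    rw [lowc_periodic] at hlt
    exact Finset.card_pos.mpr
      ⟨tmin P α, Finset.mem_filter.mpr ⟨Finset.mem_image_of_mem _ hα, hlt⟩⟩
  · -- injection into arcs containing φ
    have key : ∀ α ∈ J', lowc P φ (tmin P α) < m →
        memMod (xe P m α) (ye P m α) φ := by
      intro α hα hlow
      obtain ⟨n, hl1, hl2⟩ := exists_lift φ α
      have hper : lowc P (φ + 2*π*n) (tmin P α) < m := by
        rw [lowc_periodic]; exact hlow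
      rcases eq_or_lt_of_le hl1 with heq | hlt
      · exfalso
        apply no_leak hgen hn α
        rw [heq]
        exact hper
      · obtain ⟨hx, hy⟩ := mem_arc_of_lowc hP α hlt hl2 hper
        exact ⟨n, hx, hy⟩
    calc ((J'.image (tmin P)).filter (fun p => lowc P φ p < m)).card
        ≤ (J'.filter (fun j => memMod (xe P m j) (ye P m j) φ)).card := by
          apply Finset.card_le_card_of_injOn
            (fun s => if h : ∃ α ∈ J', tmin P α = s then Classical.choose h else 0)
          · intro s hs
            rw [Finset.mem_coe, Finset.mem_filter] at hs
            obtain ⟨hsT, hslow⟩ := hs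
            have hex : ∃ α ∈ J', tmin P α = s := by
              obtain ⟨α, hα, hts⟩ := Finset.mem_image.mp hsT
              exact ⟨α, hα, hts⟩
            simp only; rw [dif_pos hex]
            obtain ⟨hα', hts'⟩ := Classical.choose_spec hex
            rw [Finset.mem_coe, Finset.mem_filter]
            exact ⟨hα', key _ hα' (hts'.symm ▸ hslow)⟩
          · intro s₁ hs₁ s₂ hs₂ heq
            rw [Finset.mem_coe, Finset.mem_filter] at hs₁ hs₂
            have hex₁ : ∃ α ∈ J', tmin P α = s₁ := by
              obtain ⟨α, hα, hts⟩ := Finset.mem_image.mp hs₁.1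
              exact ⟨α, hα, hts⟩
            have hex₂ : ∃ α ∈ J', tmin P α = s₂ := by
              obtain ⟨α, hα, hts⟩ := Finset.mem_image.mp hs₂.1
              exact ⟨α, hα, hts⟩
            simp only at heq
            rw [dif_pos hex₁, dif_pos hex₂] at heq
            have h₁ := (Classical.choose_spec hex₁).2
            have h₂ := (Classical.choose_spec hex₂).2
            rw [← h₁, ← h₂, heq]
      _ ≤ 2 := hmult φ

/-- the shallow hitting set lemma, halfplane form -/
lemma exists_shallow (m : ℕ) (hm : 1 ≤ m) (P : Finset (ℝ × ℝ))
    (hgen : NoThreeCollinear P) :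
    ∃ T, T ⊆ P ∧ ∀ (a : ℝ × ℝ) (b : ℝ), a ≠ 0 →
      m ≤ (P.filter (fun p => a.1*p.1 + a.2*p.2 ≤ b)).card →
      (1 ≤ (T.filter (fun p => a.1*p.1 + a.2*p.2 ≤ b)).card ∧
       (T.filter (fun p => a.1*p.1 + a.2*p.2 ≤ b)).card + m ≤
         (P.filter (fun p => a.1*p.1 + a.2*p.2 ≤ b)).card + 2) := by
  rcases Nat.lt_or_ge P.card (m+2) with hsmall | hbig
  · -- small cases
    by_cases hPe : P.Nonempty
    · by_cases h1 : P.card ≤ m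
      · -- T = single point
        obtain ⟨p₀, hp₀⟩ := hPe
        refine ⟨{p₀}, Finset.singleton_subset_iff.mpr hp₀, ?_⟩
        intro a b ha hheavy
        have hfull : P.filter (fun p => a.1*p.1 + a.2*p.2 ≤ b) = P := by
          apply Finset.eq_of_subset_of_card_le (Finset.filter_subset _ _)
          omega
        have hp₀f : a.1*p₀.1 + a.2*p₀.2 ≤ b := by
          have : p₀ ∈ P.filter (fun p => a.1*p.1 + a.2*p.2 ≤ b) := by
            rw [hfull]; exact hp₀
          exact (Finset.mem_filter.mp this).2
        constructor
        · exact Finset.card_pos.mpr ⟨p₀, Finset.mem_filter.mpr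
            ⟨Finset.mem_singleton_self p₀, hp₀f⟩⟩
        · have : (({p₀} : Finset (ℝ × ℝ)).filter
              (fun p => a.1*p.1 + a.2*p.2 ≤ b)).card ≤ 1 := by
            calc _ ≤ ({p₀} : Finset (ℝ × ℝ)).card := Finset.card_le_card
                  (Finset.filter_subset _ _)
              _ = 1 := Finset.card_singleton p₀
          omega
      · -- P.card = m+1 : T = two points
        push_neg at h1
        obtain ⟨p₀, hp₀, p₁, hp₁, hne⟩ := Finset.one_lt_card.mp
          (by omega : 1 < P.card)
        refine ⟨{p₀, p₁}, Finset.insert_subset hp₀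
          (Finset.singleton_subset_iff.mpr hp₁), ?_⟩
        intro a b ha hheavy
        have hhit : p₀ ∈ P.filter (fun p => a.1*p.1 + a.2*p.2 ≤ b) ∨
            p₁ ∈ P.filter (fun p => a.1*p.1 + a.2*p.2 ≤ b) := by
          by_contra hcon
          push_neg at hcon
          have hsub : P.filter (fun p => a.1*p.1 + a.2*p.2 ≤ b) ⊆
              (P.erase p₀).erase p₁ := by
            intro q hq
            rw [Finset.mem_erase, Finset.mem_erase]
            refine ⟨?_, ?_, Finset.mem_of_mem_filter q hq⟩
            · rintro rfl; exact hcon.2 hq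
            · rintro rfl; exact hcon.1 hq
          have := Finset.card_le_card hsub
          rw [Finset.card_erase_of_mem (Finset.mem_erase.mpr ⟨Ne.symm hne, hp₁⟩),
            Finset.card_erase_of_mem hp₀] at this
          omega
        constructor
        · apply Finset.card_pos.mpr
          rcases hhit with h | h
          · exact ⟨p₀, Finset.mem_filter.mpr ⟨Finset.mem_insert_self _ _,
              (Finset.mem_filter.mp h).2⟩⟩
          · exact ⟨p₁, Finset.mem_filter.mpr ⟨Finset.mem_insert_of_mem
              (Finset.mem_singleton_self p₁), (Finset.mem_filter.mp h).2⟩⟩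
        · have hT2 : (({p₀, p₁} : Finset (ℝ × ℝ)).filter
              (fun p => a.1*p.1 + a.2*p.2 ≤ b)).card ≤ 2 := by
            calc _ ≤ ({p₀, p₁} : Finset (ℝ × ℝ)).card :=
                  Finset.card_le_card (Finset.filter_subset _ _)
              _ ≤ 2 := Finset.card_insert_le _ _ |>.trans (by simp)
          omega
    · -- P empty
      refine ⟨∅, Finset.empty_subset P, ?_⟩
      intro a b ha hheavy
      rw [Finset.not_nonempty_iff_eq_empty.mp hPe] at hheavy
      simp at hheavy
      omega
  · -- main case
    obtain ⟨T, hTP, hbounds⟩ := core hm hgen hbig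
    refine ⟨T, hTP, ?_⟩
    intro a b ha hheavy
    have ha' : ¬(a.1 = 0 ∧ a.2 = 0) := by
      rintro ⟨h1, h2⟩
      exact ha (Prod.ext h1 h2)
    obtain ⟨hr, ha1, ha2⟩ := polar_arg a.1 a.2 ha'
    set r := ‖(⟨a.1, a.2⟩ : ℂ)‖ with hrdef
    set φ := Complex.arg (⟨a.1, a.2⟩ : ℂ) with hφdef
    have hdot : ∀ q : ℝ × ℝ, a.1*q.1 + a.2*q.2 = r * vl φ q := by
      intro q
      rw [ha1, ha2]
      unfold vl
      ring
    have Mlower : P.filter (fun p => lowc P φ p < m) ⊆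
        P.filter (fun p => a.1*p.1 + a.2*p.2 ≤ b) := by
      intro p hp
      rw [Finset.mem_filter] at hp ⊢
      refine ⟨hp.1, ?_⟩
      by_contra hgt
      push_neg at hgt
      have hsub : P.filter (fun q => a.1*q.1 + a.2*q.2 ≤ b) ⊆
          P.filter (fun q => vl φ q < vl φ p) := by
        intro q hq
        rw [Finset.mem_filter] at hq ⊢
        refine ⟨hq.1, ?_⟩
        have h3 : r * vl φ q ≤ b := by rw [← hdot]; exact hq.2
        have h4 : b < r * vl φ p := by rw [← hdot]; exact hgt
        exact (mul_lt_mul_iff_of_pos_left hr).mp (lt_of_le_of_lt h3 h4)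
      have := Finset.card_le_card hsub
      have hlowp : m ≤ lowc P φ p := le_trans hheavy this
      omega
    have Mcard : m ≤ (P.filter (fun p => lowc P φ p < m)).card :=
      lowc_card_ge P m (by omega) φ
    obtain ⟨hlow1, hlow2⟩ := hbounds φ
    constructor
    · obtain ⟨t, ht⟩ := Finset.card_pos.mp hlow1
      rw [Finset.mem_filter] at ht
      have htM : t ∈ P.filter (fun p => lowc P φ p < m) :=
        Finset.mem_filter.mpr ⟨hTP ht.1, ht.2⟩
      have := (Finset.mem_filter.mp (Mlower htM)).2
      exact Finset.card_pos.mpr ⟨t, Finset.mem_filter.mpr ⟨ht.1, this⟩⟩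
    · have hsplit : T.filter (fun p => a.1*p.1 + a.2*p.2 ≤ b) ⊆
          T.filter (fun p => lowc P φ p < m) ∪
          (P.filter (fun p => a.1*p.1 + a.2*p.2 ≤ b) \ P.filter (fun p => lowc P φ p < m)) := by
        intro s hs
        rw [Finset.mem_filter] at hs
        rw [Finset.mem_union]
        by_cases hsl : lowc P φ s < m
        · exact Or.inl (Finset.mem_filter.mpr ⟨hs.1, hsl⟩)
        · refine Or.inr (Finset.mem_sdiff.mpr ⟨Finset.mem_filter.mpr
            ⟨hTP hs.1, hs.2⟩, ?_⟩)
          intro hmem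
          exact hsl (Finset.mem_filter.mp hmem).2
      have hc1 := Finset.card_le_card hsplit
      have hc2 := Finset.card_union_le (T.filter (fun p => lowc P φ p < m))
        (P.filter (fun p => a.1*p.1 + a.2*p.2 ≤ b) \ P.filter (fun p => lowc P φ p < m))
      have hc3 : (P.filter (fun p => a.1*p.1 + a.2*p.2 ≤ b) \ P.filter (fun p => lowc P φ p < m)).card =
          (P.filter (fun p => a.1*p.1 + a.2*p.2 ≤ b)).card -
          (P.filter (fun p => lowc P φ p < m)).card :=
        Finset.card_sdiff_of_subset Mlower
      have hc4 := Finset.card_le_card Mlower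
      omega

/-- polychromatic coloring for point sets in general position -/
lemma poly_of_gen : ∀ (k : ℕ), 1 ≤ k → ∀ P : Finset (ℝ × ℝ), NoThreeCollinear P →
    ∃ χ : ℝ × ℝ → Fin k, ∀ (a : ℝ × ℝ) (b : ℝ), a ≠ 0 →
      2*k - 1 ≤ (P.filter (fun p => a.1*p.1 + a.2*p.2 ≤ b)).card →
      ∀ i : Fin k, ∃ p ∈ P.filter (fun p => a.1*p.1 + a.2*p.2 ≤ b), χ p = i := by
  intro k
  induction k with
  | zero => omega
  | succ k ih =>
    intro _ P hgen
    by_cases hk : k = 0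
    · subst hk
      refine ⟨fun _ => 0, ?_⟩
      intro a b ha hheavy i
      have : 1 ≤ (P.filter (fun p => a.1*p.1 + a.2*p.2 ≤ b)).card := by omega
      obtain ⟨p, hp⟩ := Finset.card_pos.mp this
      refine ⟨p, hp, ?_⟩
      apply Subsingleton.elim (α := Fin 1)
    · have hk1 : 1 ≤ k := Nat.one_le_iff_ne_zero.mpr hk
      obtain ⟨T, hTP, hT⟩ := exists_shallow (2*k+1) (by omega) P hgen
      obtain ⟨χ', hχ'⟩ := ih hk1 (P \ T) (hgen.mono (Finset.sdiff_subset))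
      refine ⟨fun z => if z ∈ T then Fin.last k else (χ' z).castSucc, ?_⟩
      intro a b ha hheavy
      have hheavy' : 2*k+1 ≤ (P.filter (fun p => a.1*p.1 + a.2*p.2 ≤ b)).card := by
        omega
      obtain ⟨h1, h2⟩ := hT a b ha hheavy'
      intro i
      induction i using Fin.lastCases with
      | last =>
        obtain ⟨t, ht⟩ := Finset.card_pos.mp h1
        rw [Finset.mem_filter] at ht
        refine ⟨t, Finset.mem_filter.mpr ⟨hTP ht.1, ht.2⟩, ?_⟩
        simp [ht.1]
      | cast j =>
        have hPT : (P \ T).filter (fun p => a.1*p.1 + a.2*p.2 ≤ b) =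
            P.filter (fun p => a.1*p.1 + a.2*p.2 ≤ b) \ T.filter (fun p => a.1*p.1 + a.2*p.2 ≤ b) := by
          ext z
          simp only [Finset.mem_sdiff, Finset.mem_filter]
          tauto
        have hcard : 2*k - 1 ≤ ((P \ T).filter
            (fun p => a.1*p.1 + a.2*p.2 ≤ b)).card := by
          rw [hPT, Finset.card_sdiff_of_subset
            (Finset.filter_subset_filter _ hTP)]
          omega
        obtain ⟨p, hp, hχp⟩ := hχ' a b ha hcard j
        rw [hPT, Finset.mem_sdiff] at hp
        have hpP := hp.1
        have hpT : p ∉ T := by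
          intro hcon
          exact hp.2 (Finset.mem_filter.mpr ⟨hcon,
            (Finset.mem_filter.mp hpP).2⟩)
        refine ⟨p, hpP, ?_⟩
        simp only [hpT, if_false, hχp]

lemma exists_perturbation (Q : Finset (ℝ × ℝ)) (ε : ℝ) (hε : 0 < ε) :
    ∃ f : ℝ × ℝ → ℝ × ℝ,
      (∀ p ∈ Q, |(f p).1 - p.1| < ε ∧ |(f p).2 - p.2| < ε) ∧
      Set.InjOn f ↑Q ∧ NoThreeCollinear (Q.image f) := by
  induction Q using Finset.induction_on with
  | empty =>
    refine ⟨id, by simp, by simp, ?_⟩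
    intro u hu
    simp at hu
  | @insert p Q₀ hpQ₀ ih =>
    obtain ⟨f₀, hclose, hinj, hgen⟩ := ih
    set I := Q₀.image f₀ with hIdef
    -- choose the first coordinate shift
    have hIoo : (Set.Ioo (0:ℝ) (ε/2)).Infinite :=
      Set.infinite_coe_iff.mp (Set.Ioo.infinite (by linarith))
    obtain ⟨sv, hsvIoo, hsvbad⟩ := hIoo.exists_notMem_finset
      (I.image (fun x => x.1 - p.1))
    have hsv0 : 0 < sv := hsvIoo.1
    have hsvε : sv < ε/2 := hsvIoo.2
    have hsvgood : ∀ x ∈ I, p.1 + sv ≠ x.1 := by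
      intro x hx hcon
      exact hsvbad (Finset.mem_image.mpr ⟨x, hx, by linarith⟩)
    -- choose the second coordinate shift
    set g : (ℝ × ℝ) × (ℝ × ℝ) → ℝ := fun xy =>
      if xy.2.1 - xy.1.1 = 0 then 0 else
        xy.1.2 - p.2 + (xy.2.2 - xy.1.2)*(p.1 + sv - xy.1.1)/(xy.2.1 - xy.1.1)
      with hg
    obtain ⟨tv, htvIoo, htvbad⟩ := hIoo.exists_notMem_finset ((I ×ˢ I).image g)
    have htv0 : 0 < tv := htvIoo.1
    have htvε : tv < ε/2 := htvIoo.2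
    set z₀ : ℝ × ℝ := (p.1 + sv, p.2 + tv) with hz₀def
    set f : ℝ × ℝ → ℝ × ℝ := fun z => if z = p then z₀ else f₀ z with hfdef
    have hfp : f p = z₀ := by rw [hfdef]; simp
    have hfq : ∀ q ∈ Q₀, f q = f₀ q := by
      intro q hq
      rw [hfdef]
      have : q ≠ p := by rintro rfl; exact hpQ₀ hq
      simp [this]
    have himg : (insert p Q₀).image f = insert z₀ I := by
      rw [Finset.image_insert, hfp, hIdef]
      congr 1
      apply Finset.image_congr
      intro q hq
      exact hfq q hq
    have hz₀I : z₀ ∉ I := by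
      intro hcon
      exact hsvgood z₀ hcon rfl
    -- the key nondegeneracy property of the new point
    have hkey : ∀ x ∈ I, ∀ y ∈ I, x ≠ y →
        (y.1 - x.1) * (z₀.2 - x.2) - (y.2 - x.2) * (z₀.1 - x.1) ≠ 0 := by
      intro x hx y hy hxy heq0
      have hz₀1 : z₀.1 = p.1 + sv := rfl
      have hz₀2 : z₀.2 = p.2 + tv := rfl
      rw [hz₀1, hz₀2] at heq0
      by_cases hvert : y.1 - x.1 = 0
      · have hy2 : y.2 - x.2 ≠ 0 := by
          intro h2
          apply hxy
          exact Prod.ext (by linarith) (by linarith)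
        have hz1 : p.1 + sv - x.1 ≠ 0 := by
          have := hsvgood x hx
          intro h
          exact this (by linarith)
        have hzero : (y.2 - x.2)*(p.1 + sv - x.1) = 0 := by
          linear_combination (p.2 + tv - x.2) * hvert - heq0
        exact (mul_ne_zero hy2 hz1) hzero
      · apply htvbad
        rw [Finset.mem_image]
        refine ⟨(x, y), Finset.mem_product.mpr ⟨hx, hy⟩, ?_⟩
        rw [hg]
        simp only
        rw [if_neg hvert]
        have h2 : (p.2 + tv - x.2)*(y.1 - x.1) = (y.2 - x.2)*(p.1 + sv - x.1) := by
          linear_combination heq0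
        field_simp
        linear_combination -h2
    refine ⟨f, ?_, ?_, ?_⟩
    · intro q hq
      rcases Finset.mem_insert.mp hq with rfl | hq₀
      · rw [hfp]
        constructor
        · rw [show z₀.1 - q.1 = sv from by simp [hz₀def]]
          rw [abs_of_pos hsv0]; linarith
        · rw [show z₀.2 - q.2 = tv from by simp [hz₀def]]
          rw [abs_of_pos htv0]; linarith
      · rw [hfq q hq₀]
        exact hclose q hq₀
    · intro u hu v hv huv
      rw [Finset.coe_insert, Set.mem_insert_iff] at hu hv
      rcases hu with rfl | hu <;> rcases hv with rfl | hv
      · rfl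
      · exfalso
        rw [hfp, hfq v hv] at huv
        exact hz₀I (huv ▸ Finset.mem_image_of_mem f₀ hv)
      · exfalso
        rw [hfp, hfq u hu] at huv
        exact hz₀I (huv.symm ▸ Finset.mem_image_of_mem f₀ hu)
      · rw [hfq u hu, hfq v hv] at huv
        exact hinj hu hv huv
    · rw [himg]
      intro u hu v hv w hw huv huw hvw
      rcases Finset.mem_insert.mp hu with rfl | huI
      · rcases Finset.mem_insert.mp hv with rfl | hvI
        · exact absurd rfl huv
        rcases Finset.mem_insert.mp hw with rfl | hwI
        · exact absurd rfl huw
        -- det3 z₀ v w = det3 v w z₀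
        intro heq0
        apply hkey v hvI w hwI hvw
        linear_combination heq0
      · rcases Finset.mem_insert.mp hv with rfl | hvI
        · rcases Finset.mem_insert.mp hw with rfl | hwI
          · exact absurd rfl hvw
          -- det3 u z₀ w : relate to det3 u w z₀
          intro heq0
          apply hkey u huI w hwI huw
          linear_combination -heq0
        · rcases Finset.mem_insert.mp hw with rfl | hwI
          · -- det3 u v z₀ directly
            exact hkey u huI v hvI huv
          · exact hgen u huI v hvI w hwI huv huw hvw

/-- stability of a halfplane subset under small perturbations -/
lemma halfplane_stable (P : Finset (ℝ × ℝ)) :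
    ∀ S ∈ P.powerset, ∃ δ : ℝ, 0 < δ ∧
    ∀ f : ℝ × ℝ → ℝ × ℝ, (∀ p ∈ P, |(f p).1 - p.1| < δ ∧ |(f p).2 - p.2| < δ) →
    (∃ a : ℝ × ℝ, ∃ b : ℝ, a ≠ 0 ∧
      P.filter (fun p => a.1*p.1 + a.2*p.2 ≤ b) = S) →
    ∃ a' : ℝ × ℝ, ∃ b' : ℝ, a' ≠ 0 ∧
      (P.image f).filter (fun p => a'.1*p.1 + a'.2*p.2 ≤ b') = S.image f := by
  intro S hS
  by_cases hRe : ∃ a : ℝ × ℝ, ∃ b : ℝ, a ≠ 0 ∧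
      P.filter (fun p => a.1*p.1 + a.2*p.2 ≤ b) = S
  swap
  · exact ⟨1, one_pos, fun f _ h => absurd h hRe⟩
  obtain ⟨a, b, ha, hfil⟩ := hRe
  have hD : 0 < |a.1| + |a.2| := by
    by_contra h
    push_neg at h
    have h1 : |a.1| = 0 := le_antisymm (by linarith [abs_nonneg a.2]) (abs_nonneg a.1)
    have h2 : |a.2| = 0 := le_antisymm (by linarith [abs_nonneg a.1]) (abs_nonneg a.2)
    exact ha (Prod.ext (abs_eq_zero.mp h1) (abs_eq_zero.mp h2))
  have hμ : ∃ μ : ℝ, 0 < μ ∧ ∀ q ∈ P, q ∉ S → b + μ ≤ a.1*q.1 + a.2*q.2 := by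
    by_cases hPS : ((P \ S).image (fun q => a.1*q.1 + a.2*q.2 - b)).Nonempty
    · refine ⟨Finset.min' _ hPS, ?_, ?_⟩
      · obtain ⟨q, hq, hval⟩ := Finset.mem_image.mp (Finset.min'_mem _ hPS)
        rw [← hval]
        rw [Finset.mem_sdiff] at hq
        have hnot : ¬ (a.1*q.1 + a.2*q.2 ≤ b) := by
          intro hle
          exact hq.2 (hfil ▸ Finset.mem_filter.mpr ⟨hq.1, hle⟩)
        push_neg at hnot
        linarith
      · intro q hq hqS
        have hmem : a.1*q.1 + a.2*q.2 - b ∈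
            (P \ S).image (fun q => a.1*q.1 + a.2*q.2 - b) :=
          Finset.mem_image_of_mem _ (Finset.mem_sdiff.mpr ⟨hq, hqS⟩)
        have := Finset.min'_le _ _ hmem
        linarith
    · refine ⟨1, one_pos, ?_⟩
      intro q hq hqS
      exact absurd ⟨_, Finset.mem_image_of_mem _
        (Finset.mem_sdiff.mpr ⟨hq, hqS⟩)⟩ hPS
  obtain ⟨μ, hμ0, hμle⟩ := hμ
  refine ⟨μ/(4*(|a.1| + |a.2|)), by positivity, ?_⟩
  intro f hf _
  refine ⟨a, b + μ/2, ha, ?_⟩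
  have hbound : ∀ p ∈ P,
      |a.1*((f p).1 - p.1) + a.2*((f p).2 - p.2)| ≤ μ/4 := by
    intro p hp
    obtain ⟨h1, h2⟩ := hf p hp
    calc |a.1*((f p).1 - p.1) + a.2*((f p).2 - p.2)|
        ≤ |a.1*((f p).1 - p.1)| + |a.2*((f p).2 - p.2)| := abs_add_le _ _
      _ = |a.1| * |(f p).1 - p.1| + |a.2| * |(f p).2 - p.2| := by
          rw [abs_mul, abs_mul]
      _ ≤ |a.1| * (μ/(4*(|a.1| + |a.2|))) + |a.2| * (μ/(4*(|a.1| + |a.2|))) := by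
          apply add_le_add
          · exact mul_le_mul_of_nonneg_left (le_of_lt h1) (abs_nonneg _)
          · exact mul_le_mul_of_nonneg_left (le_of_lt h2) (abs_nonneg _)
      _ = μ/4 := by field_simp
  ext z
  simp only [Finset.mem_filter, Finset.mem_image]
  constructor
  · rintro ⟨⟨q, hq, rfl⟩, hzb⟩
    by_cases hqS : q ∈ S
    · exact ⟨q, hqS, rfl⟩
    · exfalso
      have hout := hμle q hq hqS
      have habs := hbound q hq
      rw [abs_le] at habs
      have : b + μ ≤ a.1*q.1 + a.2*q.2 := hout
      nlinarith [habs.1, habs.2]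
  · rintro ⟨q, hqS, rfl⟩
    have hqP : q ∈ P := (Finset.mem_powerset.mp hS) hqS
    refine ⟨⟨q, hqP, rfl⟩, ?_⟩
    have hqb : a.1*q.1 + a.2*q.2 ≤ b := by
      have : q ∈ P.filter (fun p => a.1*p.1 + a.2*p.2 ≤ b) := hfil ▸ hqS
      exact (Finset.mem_filter.mp this).2
    have habs := hbound q hqP
    rw [abs_le] at habs
    nlinarith [habs.1, habs.2]

end PolyHP

/-- Upper bound part of the main theorem: `f_H(k) ≤ 2k - 1`.
For every `k ≥ 1` and every finite point set `P ⊆ ℝ²`, there is a `k`-coloring of `P`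
such that every (closed) half-plane containing at least `2k - 1` points of `P` is
polychromatic. A half-plane is `{x | a·x ≤ b}` with `a ≠ 0`. -/
theorem points_halfplanes_polychromatic (k : ℕ) (hk : 1 ≤ k) (P : Finset (ℝ × ℝ)) :
    ∃ χ : ℝ × ℝ → Fin k,
      ∀ (a : ℝ × ℝ) (b : ℝ), a ≠ 0 →
        2 * k - 1 ≤ (P.filter (fun p => a.1 * p.1 + a.2 * p.2 ≤ b)).card →
        ∀ i : Fin k, ∃ p ∈ P.filter (fun p => a.1 * p.1 + a.2 * p.2 ≤ b), χ p = i := by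
  classical
  obtain main := PolyHP.halfplane_stable P
  choose δf hδ0 hδprop using main
  have hpow_ne : (P.powerset.attach).Nonempty := by
    rw [Finset.attach_nonempty_iff]
    exact ⟨∅, Finset.empty_mem_powerset P⟩
  set ε := ((P.powerset.attach).image (fun S => δf S.1 S.2)).min'
    (hpow_ne.image _) with hεdef
  have hε0 : 0 < ε := by
    obtain ⟨S, -, hSeq⟩ := Finset.mem_image.mp
      (Finset.min'_mem _ (hpow_ne.image (fun S => δf S.1 S.2)))
    rw [hεdef, ← hSeq]
    exact hδ0 S.1 S.2
  have hεle : ∀ S (hS : S ∈ P.powerset), ε ≤ δf S hS := by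
    intro S hS
    apply Finset.min'_le
    exact Finset.mem_image_of_mem _ (Finset.mem_attach _ ⟨S, hS⟩)
  obtain ⟨f, hfclose, hfinj, hfgen⟩ := PolyHP.exists_perturbation P ε hε0
  obtain ⟨χ', hχ'⟩ := PolyHP.poly_of_gen k hk (P.image f) hfgen
  refine ⟨fun z => χ' (f z), ?_⟩
  intro a b ha hheavy i
  set S := P.filter (fun p => a.1 * p.1 + a.2 * p.2 ≤ b) with hSdef
  have hSpow : S ∈ P.powerset := Finset.mem_powerset.mpr (Finset.filter_subset _ _)
  obtain ⟨a', b', ha', hfil'⟩ := hδprop S hSpow f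
    (fun p hp => ⟨lt_of_lt_of_le (hfclose p hp).1 (hεle S hSpow),
      lt_of_lt_of_le (hfclose p hp).2 (hεle S hSpow)⟩)
    ⟨a, b, ha, rfl⟩
  have hScard : 2*k - 1 ≤ (S.image f).card := by
    rw [Finset.card_image_of_injOn
      (hfinj.mono (Finset.coe_subset.mpr (Finset.filter_subset _ _)))]
    exact hheavy
  obtain ⟨p', hp', hχp'⟩ := hχ' a' b' ha' (by rw [hfil']; exact hScard) i
  rw [hfil'] at hp'
  obtain ⟨p, hpS, hfp⟩ := Finset.mem_image.mp hp'
  exact ⟨p, hpS, by show χ' (f p) = i; rw [hfp]; exact hχp'⟩
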